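/- Let τ>0, Ñ>1, A>0 and γ>0. Then there exist K̂>0 and γ̂>0, depending only on τ, Ñ, A and γ, such that: for every continuous b : [0,∞) → ℝ with 0 ≤ b(t) ≤ Ñ for all t ≥ 0, for every continuous w₁ : [−τ,∞) → ℝ differentiable on (0,∞) with w₁ ≡ 1 on [−τ,0] and w₁'(t) = b(t)·w₁(t−τ) − w₁(t) for t>0, and for every continuous w₂ : [−τ,∞) → ℝ differentiable on (0,∞) with w₂ ≡ 0 on [−τ,0] and w₂'(t) = b(t)·w₂(t−τ) − w₂(t) + g(t) for t>0 where g is continuous with |g(t)| ≤ A·e^{2γt}, one has |w₂(t+θ)| ≤ K̂·e^{γ̂ t}·w₁(t+θ) for all t ≥ 0 and all θ∈[−τ,0]. -/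

import Mathlib

open Set Filter
open scoped Topology

lemma gron_open {f f' : ℝ → ℝ} {ε δ a b : ℝ} (hδ : 0 ≤ δ) (hε : 0 ≤ ε)
    (hc : ContinuousOn f (Icc a b))
    (hd : ∀ s ∈ Ioo a b, HasDerivAt f (f' s) s)
    (hbd : ∀ s ∈ Ioo a b, |f' s| ≤ |f s| + ε)
    (ha : |f a| ≤ δ) :
    ∀ t ∈ Icc a b, |f t| ≤ δ * Real.exp (t - a) + ε * (Real.exp (t - a) - 1) := by
  intro t ht
  rcases eq_or_lt_of_le ht.1 with rfl | hat
  · simpa using ha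
  have key : ∀ s ∈ Ioo a t, |f t| ≤ |f s| * Real.exp (t - s) + ε * (Real.exp (t - s) - 1) := by
    intro s hs
    have hsub : Icc s t ⊆ Icc a b := Icc_subset_Icc hs.1.le ht.2
    have h1 : ∀ x ∈ Ico s t, HasDerivWithinAt f (f' x) (Ici x) x := fun x hx =>
      (hd x ⟨lt_of_lt_of_le hs.1 hx.1, lt_of_lt_of_le hx.2 ht.2⟩).hasDerivWithinAt
    have h2 : ∀ x ∈ Ico s t, ‖f' x‖ ≤ 1 * ‖f x‖ + ε := by
      intro x hx
      rw [one_mul, Real.norm_eq_abs, Real.norm_eq_abs]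
      exact hbd x ⟨lt_of_lt_of_le hs.1 hx.1, lt_of_lt_of_le hx.2 ht.2⟩
    have := norm_le_gronwallBound_of_norm_deriv_right_le (hc.mono hsub) h1 le_rfl h2 t
      ⟨hs.2.le, le_rfl⟩
    rw [gronwallBound_of_K_ne_0 one_ne_zero] at this
    simpa [one_mul, div_one] using this
  have hmem : Ioo a t ∈ 𝓝[>] a := Ioo_mem_nhdsGT_of_mem ⟨le_rfl, hat⟩
  have hle : 𝓝[>] a ≤ 𝓝[Icc a b] a :=
    (nhdsWithin_le_of_mem hmem).trans (nhdsWithin_mono a (Ioo_subset_Icc_self.trans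
      (Icc_subset_Icc le_rfl ht.2)))
  have hf : Tendsto f (𝓝[>] a) (𝓝 (f a)) :=
    (hc a ⟨le_rfl, le_trans ht.1 ht.2⟩).mono_left hle
  have hφ : Tendsto (fun s => |f s| * Real.exp (t - s) + ε * (Real.exp (t - s) - 1)) (𝓝[>] a)
      (𝓝 (|f a| * Real.exp (t - a) + ε * (Real.exp (t - a) - 1))) := by
    have h2 : Tendsto (fun s : ℝ => Real.exp (t - s)) (𝓝[>] a) (𝓝 (Real.exp (t - a))) :=
      ((Real.continuous_exp.comp (continuous_const.sub continuous_id)).tendsto a).mono_left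
        nhdsWithin_le_nhds
    exact ((hf.abs.mul h2).add ((tendsto_const_nhds).mul (h2.sub tendsto_const_nhds)))
  have hlim : |f t| ≤ |f a| * Real.exp (t - a) + ε * (Real.exp (t - a) - 1) := by
    refine ge_of_tendsto hφ ?_
    filter_upwards [hmem] with s hs using key s hs
  calc |f t| ≤ |f a| * Real.exp (t - a) + ε * (Real.exp (t - a) - 1) := hlim
    _ ≤ δ * Real.exp (t - a) + ε * (Real.exp (t - a) - 1) := by gcongr

set_option maxHeartbeats 1000000 in
theorem stmt_13 (τ Nt A γ : ℝ) (hτ : 0 < τ) (hNt : 1 < Nt) (hA : 0 < A) (hγ : 0 < γ) :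
    ∃ Khat > (0:ℝ), ∃ γhat > (0:ℝ), ∀ b g w₁ w₂ : ℝ → ℝ,
      ContinuousOn b (Ici 0) → (∀ t ≥ (0:ℝ), b t ∈ Icc (0:ℝ) Nt) →
      ContinuousOn w₁ (Ici (-τ)) → (∀ t ∈ Ioi (0:ℝ), DifferentiableAt ℝ w₁ t) →
      (∀ θ ∈ Icc (-τ) 0, w₁ θ = 1) →
      (∀ t > (0:ℝ), HasDerivAt w₁ (b t * w₁ (t - τ) - w₁ t) t) →
      ContinuousOn g (Ici 0) → (∀ t ≥ (0:ℝ), |g t| ≤ A * Real.exp (2 * γ * t)) →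
      ContinuousOn w₂ (Ici (-τ)) → (∀ t ∈ Ioi (0:ℝ), DifferentiableAt ℝ w₂ t) →
      (∀ θ ∈ Icc (-τ) 0, w₂ θ = 0) →
      (∀ t > (0:ℝ), HasDerivAt w₂ (b t * w₂ (t - τ) - w₂ t + g t) t) →
      ∀ t ≥ (0:ℝ), ∀ θ ∈ Icc (-τ) 0,
        |w₂ (t + θ)| ≤ Khat * Real.exp (γhat * t) * w₁ (t + θ) := by
  obtain ⟨ρ, hρdef⟩ : ∃ ρ : ℝ, ρ = Real.exp τ * (1 + Nt) + 1 + Real.exp (2 * γ * τ) := ⟨_, rfl⟩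
  obtain ⟨D, hDdef⟩ : ∃ D : ℝ, D = A * Real.exp (τ + 2 * γ * τ) := ⟨_, rfl⟩
  have hexpτ : (1:ℝ) ≤ Real.exp τ := by
    rw [show (1:ℝ) = Real.exp 0 by simp]
    exact Real.exp_le_exp.2 hτ.le
  have hexp2γτ : (0:ℝ) < Real.exp (2 * γ * τ) := Real.exp_pos _
  have hρ1 : (1:ℝ) < ρ := by rw [hρdef]; nlinarith
  have hρ0 : (0:ℝ) < ρ := lt_trans one_pos hρ1
  have hD0 : (0:ℝ) < D := hDdef ▸ mul_pos hA (Real.exp_pos _)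
  have hlogρ : 0 < Real.log ρ := Real.log_pos hρ1
  have ha'2 : (2:ℝ) ≤ Real.exp τ * (1 + Nt) :=
    calc (2:ℝ) = 1 * 2 := by ring
      _ ≤ Real.exp τ * (1 + Nt) :=
          mul_le_mul hexpτ (by linarith) (by norm_num) (le_trans zero_le_one hexpτ)
  have hρa : Real.exp τ * (1 + Nt) + 1 ≤ ρ := by rw [hρdef]; linarith
  have hexpleρ : Real.exp (2 * γ * τ) ≤ ρ := by rw [hρdef]; nlinarith
  refine ⟨D * ρ, by positivity, Real.log ρ / τ + 1, by positivity, ?_⟩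
  intro b g w₁ w₂ hbc hbmem hw₁c hw₁d hw₁0 hw₁' hgc hgb hw₂c hw₂d hw₂0 hw₂'
  -- Lower bound for w₁ : ∀ n, on [0, nτ], exp t * w₁ t ≥ 1
  have P : ∀ n : ℕ, ∀ t ∈ Icc (0:ℝ) (n * τ), 1 ≤ Real.exp t * w₁ t := by
    intro n
    induction n with
    | zero =>
      intro t ht
      simp only [Nat.cast_zero, zero_mul] at ht
      have h0 : t = 0 := le_antisymm ht.2 ht.1
      subst h0
      rw [hw₁0 0 ⟨neg_nonpos.2 hτ.le, le_rfl⟩]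
      simp
    | succ n ih =>
      intro t ht
      by_cases hcase : t ≤ (n:ℝ) * τ
      · exact ih t ⟨ht.1, hcase⟩
      push_neg at hcase
      have hn0 : (0:ℝ) ≤ (n:ℝ) * τ := by positivity
      have ht2 : t ≤ (n:ℝ) * τ + τ := by
        have := ht.2
        push_cast at this
        linarith
      have hw₁pos : ∀ s, -τ ≤ s → s ≤ (n:ℝ) * τ → 0 ≤ w₁ s := by
        intro s hs1 hs2
        by_cases hs0 : s ≤ 0
        · rw [hw₁0 s ⟨hs1, hs0⟩]; exact zero_le_one
        · push_neg at hs0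
          have := ih s ⟨hs0.le, hs2⟩
          nlinarith [Real.exp_pos s]
      have hsub : Icc ((n:ℝ) * τ) ((n:ℝ) * τ + τ) ⊆ Ici (-τ) := fun x hx => by
        have := hx.1
        simp only [mem_Ici]
        linarith
      have hmono : MonotoneOn (fun s => Real.exp s * w₁ s)
          (Icc ((n:ℝ) * τ) ((n:ℝ) * τ + τ)) := by
        apply monotoneOn_of_deriv_nonneg (convex_Icc _ _)
        · exact Real.continuous_exp.continuousOn.mul (hw₁c.mono hsub)
        · rw [interior_Icc]
          intro x hx
          have hx0 : (0:ℝ) < x := lt_of_le_of_lt hn0 hx.1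
          exact (Real.differentiableAt_exp.mul (hw₁d x hx0)).differentiableWithinAt
        · rw [interior_Icc]
          intro x hx
          have hx0 : (0:ℝ) < x := lt_of_le_of_lt hn0 hx.1
          have hder : HasDerivAt (fun s => Real.exp s * w₁ s)
              (Real.exp x * w₁ x + Real.exp x * (b x * w₁ (x - τ) - w₁ x)) x :=
            (Real.hasDerivAt_exp x).mul (hw₁' x hx0)
          rw [hder.deriv]
          have hb := hbmem x hx0.le
          have hw : 0 ≤ w₁ (x - τ) := by
            apply hw₁pos
            · linarith [hx.1]
            · linarith [hx.2]
          have heq : Real.exp x * w₁ x + Real.exp x * (b x * w₁ (x - τ) - w₁ x)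
              = Real.exp x * (b x * w₁ (x - τ)) := by ring
          rw [heq]
          have : (0:ℝ) ≤ b x * w₁ (x - τ) := mul_nonneg hb.1 hw
          positivity
      have h1 : 1 ≤ Real.exp ((n:ℝ) * τ) * w₁ ((n:ℝ) * τ) := ih _ ⟨hn0, le_rfl⟩
      have h2 := hmono ⟨le_rfl, by linarith⟩ ⟨hcase.le, ht2⟩ hcase.le
      exact le_trans h1 h2
  -- lower bound on w₁ in usable form
  have hw₁lb : ∀ s t : ℝ, -τ ≤ s → 0 ≤ t → s ≤ t → Real.exp (-t) ≤ w₁ s := by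
    intro s t hs ht0 hst
    by_cases hs0 : s ≤ 0
    · rw [hw₁0 s ⟨hs, hs0⟩]
      exact Real.exp_le_one_iff.2 (by linarith)
    · push_neg at hs0
      set n : ℕ := ⌈s / τ⌉₊ with hn
      have hsn : s ≤ (n:ℝ) * τ := by
        have h := Nat.le_ceil (s / τ)
        rw [div_le_iff₀ hτ] at h
        linarith [h]
      have hP := P n s ⟨hs0.le, hsn⟩
      have hm : Real.exp (-s) * Real.exp s = 1 := by
        rw [← Real.exp_add]; simp
      have h2 : Real.exp (-s) ≤ w₁ s := by
        nlinarith [Real.exp_pos s, Real.exp_pos (-s)]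
      exact le_trans (Real.exp_le_exp.2 (by linarith)) h2
  -- Upper bound for w₂ : ∀ n, on [-τ, nτ], |w₂ t| ≤ D ρ^n - D
  have H2 : ∀ n : ℕ, ∀ t ∈ Icc (-τ) ((n:ℝ) * τ), |w₂ t| ≤ D * ρ ^ n - D := by
    intro n
    induction n with
    | zero =>
      intro t ht
      simp only [Nat.cast_zero, zero_mul] at ht
      rw [hw₂0 t ht]
      simp
    | succ n ih =>
      intro t ht
      have hρn1 : (1:ℝ) ≤ ρ ^ n := one_le_pow₀ hρ1.le
      have hδ0 : (0:ℝ) ≤ D * ρ ^ n - D := by nlinarith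
      by_cases hcase : t ≤ (n:ℝ) * τ
      · refine le_trans (ih t ⟨ht.1, hcase⟩) ?_
        have : ρ ^ n ≤ ρ ^ (n + 1) := pow_le_pow_right₀ hρ1.le (Nat.le_succ n)
        nlinarith
      push_neg at hcase
      have hn0 : (0:ℝ) ≤ (n:ℝ) * τ := by positivity
      have ht2 : t ≤ (n:ℝ) * τ + τ := by
        have := ht.2
        push_cast at this
        linarith
      obtain ⟨ε, hεdef⟩ : ∃ ε : ℝ,
          ε = Nt * (D * ρ ^ n - D) + A * Real.exp (2 * γ * ((n:ℝ) * τ + τ)) := ⟨_, rfl⟩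
      have hε0 : (0:ℝ) ≤ ε := by
        have := (Real.exp_pos (2 * γ * ((n:ℝ) * τ + τ))).le
        nlinarith
      have hsub : Icc ((n:ℝ) * τ) ((n:ℝ) * τ + τ) ⊆ Ici (-τ) := fun x hx => by
        have := hx.1
        simp only [mem_Ici]
        linarith
      have hder_bound : ∀ s ∈ Ioo ((n:ℝ) * τ) ((n:ℝ) * τ + τ),
          |b s * w₂ (s - τ) - w₂ s + g s| ≤ |w₂ s| + ε := by
        intro s hs
        have hs0 : (0:ℝ) < s := lt_of_le_of_lt hn0 hs.1
        have hb := hbmem s hs0.le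
        have hw₂s : |w₂ (s - τ)| ≤ D * ρ ^ n - D := by
          apply ih
          constructor
          · linarith [hs.1]
          · linarith [hs.2]
        have hgs : |g s| ≤ A * Real.exp (2 * γ * ((n:ℝ) * τ + τ)) := by
          refine le_trans (hgb s hs0.le) ?_
          have : 2 * γ * s ≤ 2 * γ * ((n:ℝ) * τ + τ) := by nlinarith [hs.2]
          exact mul_le_mul_of_nonneg_left (Real.exp_le_exp.2 this) hA.le
        have habs : |b s * w₂ (s - τ) - w₂ s + g s|
            ≤ |b s * w₂ (s - τ)| + |w₂ s| + |g s| := by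
          have h1 := abs_add_le (b s * w₂ (s - τ) - w₂ s) (g s)
          have h2 := abs_add_le (b s * w₂ (s - τ)) (-w₂ s)
          rw [abs_neg] at h2
          rw [sub_eq_add_neg] at h1
          calc |b s * w₂ (s - τ) + -w₂ s + g s|
              ≤ |b s * w₂ (s - τ) + -w₂ s| + |g s| := h1
            _ ≤ |b s * w₂ (s - τ)| + |w₂ s| + |g s| := by linarith
        have h1 : |b s * w₂ (s - τ)| ≤ Nt * (D * ρ ^ n - D) := by
          rw [abs_mul, abs_of_nonneg hb.1]
          exact mul_le_mul hb.2 hw₂s (abs_nonneg _) (by linarith [hNt])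
        rw [hεdef]
        linarith
      have hinit : |w₂ ((n:ℝ) * τ)| ≤ D * ρ ^ n - D := ih ((n:ℝ) * τ) ⟨by linarith, le_rfl⟩
      have hG := gron_open hδ0 hε0 (hw₂c.mono hsub)
        (fun s hs => hw₂' s (lt_of_le_of_lt hn0 hs.1)) hder_bound hinit t ⟨hcase.le, ht2⟩
      -- conclude arithmetic
      have hE : Real.exp (t - (n:ℝ) * τ) ≤ Real.exp τ :=
        Real.exp_le_exp.2 (by linarith)
      have hE0 : (0:ℝ) < Real.exp (t - (n:ℝ) * τ) := Real.exp_pos _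
      have step1 : |w₂ t| ≤ (D * ρ ^ n - D) * Real.exp τ + ε * Real.exp τ := by
        refine le_trans hG ?_
        have h1 : (D * ρ ^ n - D) * Real.exp (t - (n:ℝ) * τ) ≤ (D * ρ ^ n - D) * Real.exp τ :=
          mul_le_mul_of_nonneg_left hE hδ0
        have h2 : ε * (Real.exp (t - (n:ℝ) * τ) - 1) ≤ ε * Real.exp τ :=
          mul_le_mul_of_nonneg_left (by linarith) hε0
        linarith
      refine le_trans step1 ?_
      have hfact : A * Real.exp (2 * γ * ((n:ℝ) * τ + τ)) * Real.exp τ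
          = D * Real.exp (2 * γ * τ) ^ n := by
        have e1 : Real.exp (2 * γ * ((n:ℝ) * τ + τ)) * Real.exp τ
            = Real.exp (τ + 2 * γ * τ) * Real.exp (2 * γ * τ) ^ n := by
          rw [← Real.exp_nat_mul, ← Real.exp_add, ← Real.exp_add]
          congr 1
          ring
        rw [hDdef, mul_assoc, e1]
        ring
      have hexple : Real.exp (2 * γ * τ) ^ n ≤ ρ ^ n :=
        pow_le_pow_left₀ hexp2γτ.le hexpleρ n
      have hpow : ρ * ρ ^ n = ρ ^ (n + 1) := by rw [pow_succ]; ring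
      have expand : (D * ρ ^ n - D) * Real.exp τ + ε * Real.exp τ
          = Real.exp τ * (1 + Nt) * (D * ρ ^ n - D)
            + A * Real.exp (2 * γ * ((n:ℝ) * τ + τ)) * Real.exp τ := by
        rw [hεdef]; ring
      rw [expand, hfact]
      have h3 : D * Real.exp (2 * γ * τ) ^ n ≤ D * ρ ^ n :=
        mul_le_mul_of_nonneg_left hexple hD0.le
      have h4 : Real.exp τ * (1 + Nt) * (D * ρ ^ n - D) + D * ρ ^ n
          ≤ D * ρ ^ (n + 1) - D := by
        rw [← hpow]
        nlinarith
      linarith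
  -- Final combination
  intro t ht θ hθ
  set n : ℕ := ⌈t / τ⌉₊ with hn
  have htn : t ≤ (n:ℝ) * τ := by
    have h := Nat.le_ceil (t / τ)
    rw [div_le_iff₀ hτ] at h
    linarith
  have hn1 : (n:ℝ) ≤ t / τ + 1 := by
    have := Nat.ceil_lt_add_one (by positivity : (0:ℝ) ≤ t / τ)
    linarith
  have hmem : t + θ ∈ Icc (-τ) ((n:ℝ) * τ) := ⟨by linarith [hθ.1], by linarith [hθ.2]⟩
  have h1 : |w₂ (t + θ)| ≤ D * ρ ^ n := le_trans (H2 n (t + θ) hmem) (by linarith)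
  have h2 : (ρ:ℝ) ^ n = Real.exp ((n:ℝ) * Real.log ρ) := by
    rw [Real.exp_nat_mul, Real.exp_log hρ0]
  have h3 : D * ρ ^ n ≤ D * ρ * Real.exp (Real.log ρ / τ * t) := by
    rw [h2]
    have : (n:ℝ) * Real.log ρ ≤ (t / τ + 1) * Real.log ρ :=
      mul_le_mul_of_nonneg_right hn1 hlogρ.le
    calc D * Real.exp ((n:ℝ) * Real.log ρ)
        ≤ D * Real.exp ((t / τ + 1) * Real.log ρ) :=
          mul_le_mul_of_nonneg_left (Real.exp_le_exp.2 this) hD0.le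
      _ = D * ρ * Real.exp (Real.log ρ / τ * t) := by
          rw [show (t / τ + 1) * Real.log ρ = Real.log ρ / τ * t + Real.log ρ by
            field_simp]
          rw [Real.exp_add, Real.exp_log hρ0]
          ring
  have h4 : Real.exp (-t) ≤ w₁ (t + θ) :=
    hw₁lb (t + θ) t (by linarith [hθ.1]) ht (by linarith [hθ.2])
  have h5 : D * ρ * Real.exp (Real.log ρ / τ * t)
      = D * ρ * Real.exp ((Real.log ρ / τ + 1) * t) * Real.exp (-t) := by
    rw [mul_assoc (D * ρ) (Real.exp ((Real.log ρ / τ + 1) * t)) (Real.exp (-t)),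
      ← Real.exp_add,
      show (Real.log ρ / τ + 1) * t + -t = Real.log ρ / τ * t by ring]
  calc |w₂ (t + θ)| ≤ D * ρ * Real.exp (Real.log ρ / τ * t) := le_trans h1 h3
    _ = D * ρ * Real.exp ((Real.log ρ / τ + 1) * t) * Real.exp (-t) := h5
    _ ≤ D * ρ * Real.exp ((Real.log ρ / τ + 1) * t) * w₁ (t + θ) := by
        refine mul_le_mul_of_nonneg_left h4 ?_
        positivity
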